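/- Assume the discrete continuity constraint holds at every node. Then the total energy production equals the total dissipation: Σ_i ⟪u i, RHS i⟫ = - Σ_i Σ_{j ≠ i} ((dadd i j / 2)·‖u j - u i‖² + (dp i j / 2)·(p j - p i)²). In particular, if dadd i j ≥ 0 and dp i j ≥ 0 for all i ≠ j, then Σ_i ⟪u i, RHS i⟫ ≤ 0. -/

import Mathlib

open scoped RealInnerProductSpace BigOperators

private lemma sum_erase_swap {N : ℕ} (f : Fin N → Fin N → ℝ) :
    ∑ i, ∑ j ∈ Finset.univ.erase i, f i j = ∑ i, ∑ j ∈ Finset.univ.erase i, f j i := by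
  rw [Finset.sum_comm' (s' := fun j => Finset.univ.erase j) (t' := Finset.univ)]
  intro i j
  simp [ne_comm, eq_comm]

private lemma symmetrize {N : ℕ} (f : Fin N → Fin N → ℝ) :
    ∑ i, ∑ j ∈ Finset.univ.erase i, f i j
      = ∑ i, ∑ j ∈ Finset.univ.erase i, (f i j + f j i) / 2 := by
  have h := sum_erase_swap f
  simp only [div_eq_mul_inv, add_mul, Finset.sum_add_distrib, ← Finset.sum_mul]
  nlinarith [h]

/-- Total energy production equals total dissipation: under the discrete
continuity constraint at every node,
`Σ_i ⟪u i, RHS i⟫ = -Σ_i Σ_{j ≠ i} ((dadd i j / 2)·‖u j - u i‖² + (dp i j / 2)·(p j - p i)²)`;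
in particular, it is nonpositive if `dadd` and `dp` are nonnegative off the diagonal. -/
theorem total_energy_dissipation
    (d N : ℕ) (hd : 1 ≤ d) (hN : 1 ≤ N)
    (u : Fin N → EuclideanSpace ℝ (Fin d)) (p : Fin N → ℝ)
    (c : Fin N → Fin N → EuclideanSpace ℝ (Fin d))
    (hc : ∀ i j, c j i = -c i j)
    (atil dadd dp : Fin N → Fin N → ℝ)
    (hatil : ∀ i j, atil i j = ⟪((1 : ℝ) / 2) • (u j + u i), c i j⟫)
    (hdadd_symm : ∀ i j, dadd i j = dadd j i)
    (hdp_symm : ∀ i j, dp i j = dp j i)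
    (RHS : Fin N → EuclideanSpace ℝ (Fin d))
    (hRHS : ∀ i, RHS i =
      (∑ j ∈ Finset.univ.erase i,
        ((dadd i j - atil i j) • (u j - u i) - (p j - p i) • c i j))
      - (∑ j ∈ Finset.univ.erase i, atil i j) • u i)
    (hcont : ∀ i, ∑ j ∈ Finset.univ.erase i,
      (dp i j * (p j - p i) - ⟪u j + u i, c i j⟫) = 0) :
    (∑ i, ⟪u i, RHS i⟫ =
      -∑ i, ∑ j ∈ Finset.univ.erase i,
        ((dadd i j / 2) * ‖u j - u i‖ ^ 2 + (dp i j / 2) * (p j - p i) ^ 2)) ∧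
    ((∀ i j, i ≠ j → 0 ≤ dadd i j) → (∀ i j, i ≠ j → 0 ≤ dp i j) →
      ∑ i, ⟪u i, RHS i⟫ ≤ 0) := by
  set g : Fin N → Fin N → ℝ := fun i j =>
    (dadd i j - atil i j) * (⟪u i, u j⟫ - ⟪u i, u i⟫) - (p j - p i) * ⟪u i, c i j⟫
      - atil i j * ⟪u i, u i⟫ with hg
  set w : Fin N → Fin N → ℝ := fun i j => ⟪u j + u i, c i j⟫ with hw
  -- Step 1: expand the RHS
  have hS : ∀ i, ⟪u i, RHS i⟫ = ∑ j ∈ Finset.univ.erase i, g i j := by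
    intro i
    rw [hRHS i, inner_sub_right, inner_sum, real_inner_smul_right, Finset.sum_mul,
      ← Finset.sum_sub_distrib]
    refine Finset.sum_congr rfl fun j _ => ?_
    simp only [hg, inner_sub_right, real_inner_smul_right]
  have hS2 : ∑ i, ⟪u i, RHS i⟫ = ∑ i, ∑ j ∈ Finset.univ.erase i, g i j :=
    Finset.sum_congr rfl fun i _ => hS i
  -- Step 2: symmetrize g
  have hsym : ∀ i j : Fin N, j ≠ i → (g i j + g j i) / 2
      = -((dadd i j / 2) * ‖u j - u i‖ ^ 2) - (1 / 2) * ((p j - p i) * w i j) := by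
    intro i j hij
    have hnorm : (‖u j - u i‖ : ℝ) ^ 2 = ⟪u j - u i, u j - u i⟫ :=
      (real_inner_self_eq_norm_sq _).symm
    rw [hnorm]
    simp only [hg, hw, hatil, hc i j, hdadd_symm j i, inner_neg_right, inner_add_left,
      inner_add_right, inner_sub_left, inner_sub_right, real_inner_smul_left]
    rw [real_inner_comm (u j) (u i)]
    ring
  have hS3 : ∑ i, ⟪u i, RHS i⟫
      = ∑ i, ∑ j ∈ Finset.univ.erase i,
          (-((dadd i j / 2) * ‖u j - u i‖ ^ 2) - (1 / 2) * ((p j - p i) * w i j)) := by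
    rw [hS2, symmetrize g]
    refine Finset.sum_congr rfl fun i _ => Finset.sum_congr rfl fun j hj => ?_
    exact hsym i j (Finset.mem_erase.mp hj).1
  -- Step 3: the pressure term
  have hwanti : ∀ i j : Fin N, w j i = -w i j := by
    intro i j
    simp only [hw, hc i j, inner_neg_right, add_comm (u i) (u j)]
  have hcontw : ∀ i, ∑ j ∈ Finset.univ.erase i, w i j
      = ∑ j ∈ Finset.univ.erase i, dp i j * (p j - p i) := by
    intro i
    have h := hcont i
    rw [Finset.sum_sub_distrib] at h
    linarith
  have h1 : ∑ i, ∑ j ∈ Finset.univ.erase i, p j * w i j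
      = -∑ i, ∑ j ∈ Finset.univ.erase i, p i * w i j := by
    rw [sum_erase_swap (fun i j => p j * w i j), ← Finset.sum_neg_distrib]
    refine Finset.sum_congr rfl fun i _ => ?_
    rw [← Finset.sum_neg_distrib]
    refine Finset.sum_congr rfl fun j _ => ?_
    rw [hwanti i j]
    ring
  have h2 : ∑ i, ∑ j ∈ Finset.univ.erase i, p i * w i j
      = ∑ i, ∑ j ∈ Finset.univ.erase i, p i * (dp i j * (p j - p i)) := by
    refine Finset.sum_congr rfl fun i _ => ?_
    rw [← Finset.mul_sum, ← Finset.mul_sum, hcontw i]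
  have h3 : ∑ i, ∑ j ∈ Finset.univ.erase i, p i * (dp i j * (p j - p i))
      = -∑ i, ∑ j ∈ Finset.univ.erase i, (dp i j * (p j - p i) ^ 2) / 2 := by
    rw [symmetrize (fun i j => p i * (dp i j * (p j - p i))), ← Finset.sum_neg_distrib]
    refine Finset.sum_congr rfl fun i _ => ?_
    rw [← Finset.sum_neg_distrib]
    refine Finset.sum_congr rfl fun j _ => ?_
    have h := hdp_symm j i
    simp only [h]
    ring
  have hT : ∑ i, ∑ j ∈ Finset.univ.erase i, (p j - p i) * w i j
      = ∑ i, ∑ j ∈ Finset.univ.erase i, dp i j * (p j - p i) ^ 2 := by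
    have e1 : ∑ i, ∑ j ∈ Finset.univ.erase i, (p j - p i) * w i j
        = (∑ i, ∑ j ∈ Finset.univ.erase i, p j * w i j)
          - ∑ i, ∑ j ∈ Finset.univ.erase i, p i * w i j := by
      simp only [sub_mul, Finset.sum_sub_distrib]
    have e2 : ∑ i, ∑ j ∈ Finset.univ.erase i, dp i j * (p j - p i) ^ 2
        = 2 * ∑ i, ∑ j ∈ Finset.univ.erase i, (dp i j * (p j - p i) ^ 2) / 2 := by
      rw [Finset.mul_sum]
      refine Finset.sum_congr rfl fun i _ => ?_
      rw [Finset.mul_sum]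
      refine Finset.sum_congr rfl fun j _ => ?_
      ring
    rw [e1, h1, h2, h3, e2]
    ring
  -- Assemble the main identity
  have main : ∑ i, ⟪u i, RHS i⟫
      = -∑ i, ∑ j ∈ Finset.univ.erase i,
          ((dadd i j / 2) * ‖u j - u i‖ ^ 2 + (dp i j / 2) * (p j - p i) ^ 2) := by
    have e_lhs : ∑ i, ∑ j ∈ Finset.univ.erase i,
        (-((dadd i j / 2) * ‖u j - u i‖ ^ 2) - (1 / 2) * ((p j - p i) * w i j))
        = (-∑ i, ∑ j ∈ Finset.univ.erase i, (dadd i j / 2) * ‖u j - u i‖ ^ 2)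
          - (1 / 2) * ∑ i, ∑ j ∈ Finset.univ.erase i, (p j - p i) * w i j := by
      simp only [Finset.sum_sub_distrib, Finset.sum_neg_distrib, ← Finset.mul_sum]
    have e_rhs : ∑ i, ∑ j ∈ Finset.univ.erase i,
        ((dadd i j / 2) * ‖u j - u i‖ ^ 2 + (dp i j / 2) * (p j - p i) ^ 2)
        = (∑ i, ∑ j ∈ Finset.univ.erase i, (dadd i j / 2) * ‖u j - u i‖ ^ 2)
          + (1 / 2) * ∑ i, ∑ j ∈ Finset.univ.erase i, dp i j * (p j - p i) ^ 2 := by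
      rw [Finset.mul_sum, ← Finset.sum_add_distrib]
      refine Finset.sum_congr rfl fun i _ => ?_
      rw [Finset.mul_sum, ← Finset.sum_add_distrib]
      refine Finset.sum_congr rfl fun j _ => ?_
      ring
    rw [hS3, e_lhs, e_rhs, hT]
    ring
  refine ⟨main, fun hda hdpn => ?_⟩
  rw [main]
  have : 0 ≤ ∑ i, ∑ j ∈ Finset.univ.erase i,
      ((dadd i j / 2) * ‖u j - u i‖ ^ 2 + (dp i j / 2) * (p j - p i) ^ 2) := by
    refine Finset.sum_nonneg fun i _ => Finset.sum_nonneg fun j hj => ?_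
    have hij : i ≠ j := ((Finset.mem_erase.mp hj).1).symm
    have h1 := hda i j hij
    have h2 := hdpn i j hij
    have := sq_nonneg (‖u j - u i‖)
    have := sq_nonneg (p j - p i)
    nlinarith
  linarith
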